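/- For a down-set Δ ⊆ 2^[n] with ∅ ∈ Δ and Δ ≠ 2^[n], letting 𝓜 be the blockers of Δ and 𝓜* the blockers of Δ*, one has ∑_{T* ⊆ 𝓜*} (−1)^{|T*|} 2^{−|⋃T*|} + ∑_{T ⊆ 𝓜} (−1)^{|T|} 2^{−|⋃T|} = 1, where sums range over all subfamilies including the empty one (with ⋃∅ = ∅). -/

import Mathlib

open Finset

/-- The Alexander dual of a family of subsets of `Fin n`. -/
def alexDual {n : ℕ} (Δ : Finset (Finset (Fin n))) : Finset (Finset (Fin n)) :=
  (Finset.univ.filter (fun σ => σ ∉ Δ)).image (fun σ => σᶜ)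

lemma mem_alexDual' {n : ℕ} (Δ : Finset (Finset (Fin n))) (σ : Finset (Fin n)) :
    σ ∈ alexDual Δ ↔ σᶜ ∉ Δ := by
  simp only [alexDual, mem_image, mem_filter, mem_univ, true_and]
  constructor
  · rintro ⟨τ, hτ, rfl⟩; simpa using hτ
  · intro h; exact ⟨σᶜ, h, by simp⟩

lemma card_superset' {n : ℕ} (s : Finset (Fin n)) :
    (univ.filter (fun σ => s ⊆ σ)).card = 2 ^ (sᶜ.card) := by
  rw [← card_powerset]
  apply card_bij' (fun σ _ => σ \ s) (fun τ _ => τ ∪ s)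
  · intro σ hσ
    simp only [mem_powerset]
    intro x hx
    simp only [mem_sdiff] at hx
    simpa using hx.2
  · intro τ hτ
    simp only [mem_filter, mem_univ, true_and]
    exact subset_union_right
  · intro σ hσ
    simp only [mem_filter, mem_univ, true_and] at hσ
    exact sdiff_union_of_subset hσ
  · intro τ hτ
    simp only [mem_powerset] at hτ
    have hd : Disjoint τ s := by
      rw [disjoint_left]
      intro x hx hxs
      have := hτ hx
      simp only [mem_compl] at this
      exact this hxs
    rw [union_sdiff_right, sdiff_eq_self_of_disjoint hd]

lemma half_pow' {n : ℕ} (s : Finset (Fin n)) :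
    ((univ.filter (fun σ => s ⊆ σ)).card : ℝ) / 2 ^ n = (1 / 2 : ℝ) ^ s.card := by
  rw [card_superset']
  have h : s.card + sᶜ.card = n := by
    have := Finset.card_add_card_compl s
    simpa using this
  have h2 : (2:ℝ) ^ n = 2 ^ s.card * 2 ^ sᶜ.card := by rw [← pow_add, h]
  rw [h2]
  push_cast
  rw [div_pow, one_pow]
  field_simp

lemma key_sum' {n : ℕ} (𝓜 Γ : Finset (Finset (Fin n)))
    (h : ∀ σ, σ ∈ Γ ↔ ∀ M ∈ 𝓜, ¬ M ⊆ σ) :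
    ∑ T ∈ 𝓜.powerset, (-1 : ℝ) ^ T.card * (1 / 2 : ℝ) ^ (T.sup id).card
      = (Γ.card : ℝ) / 2 ^ n := by
  have step1 : ∀ T : Finset (Finset (Fin n)),
      ((1:ℝ)/2) ^ (T.sup id).card
        = (∑ σ : Finset (Fin n), if T.sup id ⊆ σ then (1:ℝ) else 0) / 2 ^ n := by
    intro T
    rw [sum_boole, ← half_pow']
  calc ∑ T ∈ 𝓜.powerset, (-1 : ℝ) ^ T.card * (1 / 2 : ℝ) ^ (T.sup id).card
      = ∑ T ∈ 𝓜.powerset, (∑ σ : Finset (Fin n),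
          (-1 : ℝ) ^ T.card * (if T.sup id ⊆ σ then (1:ℝ) else 0)) / 2 ^ n := by
        refine sum_congr rfl fun T _ => ?_
        rw [step1 T, ← mul_sum, mul_div_assoc]
    _ = (∑ σ : Finset (Fin n), ∑ T ∈ 𝓜.powerset,
          (-1 : ℝ) ^ T.card * (if T.sup id ⊆ σ then (1:ℝ) else 0)) / 2 ^ n := by
        rw [← sum_div, sum_comm]
    _ = (∑ σ : Finset (Fin n),
          if (𝓜.filter (fun M => M ⊆ σ)) = ∅ then (1:ℝ) else 0) / 2 ^ n := by
        congr 1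
        refine sum_congr rfl fun σ _ => ?_
        have hfil : 𝓜.powerset.filter (fun T => T.sup id ⊆ σ)
            = (𝓜.filter (fun M => M ⊆ σ)).powerset := by
          ext T
          rw [mem_filter, mem_powerset, mem_powerset]
          constructor
          · rintro ⟨h1, h2⟩ M hM
            exact mem_filter.mpr ⟨h1 hM, Finset.sup_le_iff.mp h2 M hM⟩
          · intro h1
            exact ⟨fun M hM => (mem_filter.mp (h1 hM)).1,
              Finset.sup_le_iff.mpr fun M hM => (mem_filter.mp (h1 hM)).2⟩
        calc ∑ T ∈ 𝓜.powerset,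
              (-1 : ℝ) ^ T.card * (if T.sup id ⊆ σ then (1:ℝ) else 0)
            = ∑ T ∈ 𝓜.powerset.filter (fun T => T.sup id ⊆ σ), (-1 : ℝ) ^ T.card := by
              rw [sum_filter]
              refine sum_congr rfl fun T _ => ?_
              split <;> simp
          _ = ∑ T ∈ (𝓜.filter (fun M => M ⊆ σ)).powerset, (-1 : ℝ) ^ T.card := by
              rw [hfil]
          _ = ((∑ T ∈ (𝓜.filter (fun M => M ⊆ σ)).powerset, (-1 : ℤ) ^ T.card : ℤ) : ℝ) := by
              push_cast; rfl
          _ = if (𝓜.filter (fun M => M ⊆ σ)) = ∅ then (1:ℝ) else 0 := by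
              rw [Finset.sum_powerset_neg_one_pow_card]
              split <;> simp
    _ = (Γ.card : ℝ) / 2 ^ n := by
        rw [sum_boole]
        have hfe : univ.filter (fun σ : Finset (Fin n) =>
            (𝓜.filter (fun M => M ⊆ σ)) = ∅) = Γ := by
          ext σ
          simp only [mem_filter, mem_univ, true_and, filter_eq_empty_iff, h σ]
        rw [hfe]

lemma blocker_char' {n : ℕ} (Δ 𝓜 : Finset (Finset (Fin n)))
    (hΔ : ∀ σ ∈ Δ, ∀ τ ⊆ σ, τ ∈ Δ)
    (h𝓜 : ∀ M, M ∈ 𝓜 ↔ M ∉ Δ ∧ ∀ τ ⊂ M, τ ∈ Δ) :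
    ∀ σ, σ ∈ Δ ↔ ∀ M ∈ 𝓜, ¬ M ⊆ σ := by
  intro σ
  constructor
  · intro hσ M hM hMσ
    exact ((h𝓜 M).1 hM).1 (hΔ σ hσ M hMσ)
  · intro hb
    by_contra hσ
    -- find a minimal non-member inside σ
    have : ∀ k : ℕ, ∀ σ : Finset (Fin n), σ.card ≤ k → σ ∉ Δ → ∃ M ∈ 𝓜, M ⊆ σ := by
      intro k
      induction k with
      | zero =>
        intro σ hcard hσ
        have hemp : σ = ∅ := card_eq_zero.mp (Nat.le_antisymm hcard (Nat.zero_le _))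
        subst hemp
        exact ⟨∅, (h𝓜 ∅).2 ⟨hσ, fun τ hτ => absurd hτ (Finset.not_ssubset_empty τ)⟩, le_rfl⟩
      | succ k ih =>
        intro σ hcard hσ
        by_cases hmin : ∀ τ ⊂ σ, τ ∈ Δ
        · exact ⟨σ, (h𝓜 σ).2 ⟨hσ, hmin⟩, le_rfl⟩
        · push_neg at hmin
          obtain ⟨τ, hτσ, hτ⟩ := hmin
          obtain ⟨M, hM, hMτ⟩ := ih τ (by
            have := Finset.card_lt_card hτσ
            omega) hτ
          exact ⟨M, hM, hMτ.trans hτσ.subset⟩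
    obtain ⟨M, hM, hMσ⟩ := this σ.card σ le_rfl hσ
    exact hb M hM hMσ

theorem stmt_14 (n : ℕ) (Δ : Finset (Finset (Fin n)))
    (hΔ : ∀ σ ∈ Δ, ∀ τ ⊆ σ, τ ∈ Δ)
    (h0 : ∅ ∈ Δ) (hne : Δ ≠ Finset.univ)
    (𝓜 : Finset (Finset (Fin n)))
    (h𝓜 : ∀ M, M ∈ 𝓜 ↔ M ∉ Δ ∧ ∀ τ ⊂ M, τ ∈ Δ)
    (𝓜' : Finset (Finset (Fin n)))
    (h𝓜' : ∀ M, M ∈ 𝓜' ↔ M ∉ alexDual Δ ∧ ∀ τ ⊂ M, τ ∈ alexDual Δ) :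
    (∑ T ∈ 𝓜'.powerset, (-1 : ℝ) ^ T.card * (1 / 2 : ℝ) ^ (T.sup id).card) +
      (∑ T ∈ 𝓜.powerset, (-1 : ℝ) ^ T.card * (1 / 2 : ℝ) ^ (T.sup id).card) =
      1 := by
  have hdual_down : ∀ σ ∈ alexDual Δ, ∀ τ ⊆ σ, τ ∈ alexDual Δ := by
    intro σ hσ τ hτσ
    rw [mem_alexDual'] at hσ ⊢
    intro hτc
    exact hσ (hΔ τᶜ hτc σᶜ (compl_subset_compl.mpr hτσ))
  have c1 := blocker_char' Δ 𝓜 hΔ h𝓜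
  have c2 := blocker_char' (alexDual Δ) 𝓜' hdual_down h𝓜'
  rw [key_sum' 𝓜 Δ c1, key_sum' 𝓜' (alexDual Δ) c2]
  have hcard : (alexDual Δ).card + Δ.card = 2 ^ n := by
    have hinj : ((univ.filter (fun σ => σ ∉ Δ)).image (fun σ : Finset (Fin n) => σᶜ)).card
        = (univ.filter (fun σ => σ ∉ Δ)).card :=
      card_image_of_injective _ compl_injective
    have hΔfil : univ.filter (fun σ : Finset (Fin n) => σ ∈ Δ) = Δ := by
      ext σ; simp
    have := Finset.card_filter_add_card_filter_not
      (s := (univ : Finset (Finset (Fin n)))) (p := fun σ => σ ∈ Δ)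
    simp only [hΔfil, Finset.card_univ, Fintype.card_finset, Fintype.card_fin] at this
    unfold alexDual
    rw [hinj]
    omega
  have h2n : (2:ℝ) ^ n ≠ 0 := by positivity
  rw [← add_div, div_eq_one_iff_eq h2n]
  exact_mod_cast hcard
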